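/- Let S₀ be a real vector space and D, J ∈ End_ℝ(S₀) with D ∘ D = id, J ∘ J = −id and J ∘ D = −D ∘ J. Set S⁺ = ker(D − id). Then the ℝ-linear map ℂ ⊗_ℝ S⁺ → S₀ sending z ⊗ x to (Re z)·x + (Im z)·J(x) is an isomorphism of real vector spaces. -/
import Mathlib


open TensorProduct in
set_option maxHeartbeats 1600000 in
/-- If `D² = id`, `J² = −id` and `J∘D = −D∘J`, then with `S⁺ = ker(D − id)` the map
`ℂ ⊗_ℝ S⁺ → S₀`, `z ⊗ x ↦ (Re z)·x + (Im z)·J(x)`, is an isomorphism of real vector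
spaces. -/
theorem twisted_complexification_iso
    {S₀ : Type*} [AddCommGroup S₀] [Module ℝ S₀]
    (D J : Module.End ℝ S₀) (hD : D * D = 1) (hJ : J * J = -1)
    (hJD : J * D = -(D * J)) :
    ∃ f : ℂ ⊗[ℝ] ↥(LinearMap.ker (D - 1)) →ₗ[ℝ] S₀,
      (∀ (z : ℂ) (x : LinearMap.ker (D - 1)),
        f (z ⊗ₜ x) = z.re • (x : S₀) + z.im • J (x : S₀)) ∧
      Function.Bijective f := by
  have hDJ : D * J = -(J * D) := by rw [hJD, neg_neg]
  set Sp := LinearMap.ker (D - 1) with hSpdef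
  -- facts
  have hDx : ∀ x : Sp, D (x : S₀) = (x : S₀) := by
    intro x
    have h : (D - 1) (x : S₀) = 0 := x.2
    rw [LinearMap.sub_apply, Module.End.one_apply, sub_eq_zero] at h
    exact h
  have hDJx : ∀ y : S₀, D (J y) = -(J (D y)) := by
    intro y
    have := congrArg (fun L : Module.End ℝ S₀ => L y) hDJ
    simpa [Module.End.mul_apply] using this
  have hJJ : ∀ y : S₀, J (J y) = -y := by
    intro y
    have := congrArg (fun L : Module.End ℝ S₀ => L y) hJ
    simpa [Module.End.mul_apply] using this
  -- the forward map
  let B : ℂ →ₗ[ℝ] Sp →ₗ[ℝ] S₀ := LinearMap.mk₂ ℝ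
    (fun z x => z.re • (x : S₀) + z.im • J (x : S₀))
    (fun z w x => by simp [add_smul]; abel)
    (fun c z x => by simp [Complex.smul_re, Complex.smul_im, mul_smul, smul_add])
    (fun z x y => by simp [smul_add]; abel)
    (fun c z x => by simp [smul_smul, mul_comm])
  let f : ℂ ⊗[ℝ] Sp →ₗ[ℝ] S₀ := TensorProduct.lift B
  have hf : ∀ (z : ℂ) (x : Sp), f (z ⊗ₜ x) = z.re • (x : S₀) + z.im • J (x : S₀) := by
    intro z x
    simp only [f, TensorProduct.lift.tmul, B, LinearMap.mk₂_apply]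
  -- projections
  have keyp : (D - 1) * ((2:ℝ)⁻¹ • (1 + D)) = 0 := by
    have e1 : (D - 1) * ((2:ℝ)⁻¹ • (1 + D)) = (2:ℝ)⁻¹ • ((D - 1) * (1 + D)) :=
      mul_smul_comm _ _ _
    have e2 : (D - 1) * (1 + D) = D * D - 1 := by noncomm_ring
    rw [e1, e2, hD]; simp
  have keyq : (D - 1) * (-(J * ((2:ℝ)⁻¹ • (1 - D)))) = 0 := by
    have e1 : (D - 1) * (-(J * ((2:ℝ)⁻¹ • (1 - D)))) =
        (2:ℝ)⁻¹ • ((D - 1) * (-(J * (1 - D)))) := by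
      rw [mul_smul_comm, ← smul_neg, mul_smul_comm]
    have e2 : (D - 1) * (-(J * (1 - D))) =
        -(J * (D * D - 1)) - (D * J + J * D) * (1 - D) := by noncomm_ring
    rw [e1, e2, hD, hDJ]; simp
  have hp : ∀ s : S₀, ((2:ℝ)⁻¹ • (1 + D)) s ∈ Sp := by
    intro s
    rw [hSpdef, LinearMap.mem_ker]
    have := congrArg (fun L : Module.End ℝ S₀ => L s) keyp
    simp only [Module.End.mul_apply, LinearMap.zero_apply] at this
    exact this
  have hq : ∀ s : S₀, (-(J * ((2:ℝ)⁻¹ • (1 - D)))) s ∈ Sp := by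
    intro s
    rw [hSpdef, LinearMap.mem_ker]
    have := congrArg (fun L : Module.End ℝ S₀ => L s) keyq
    simp only [Module.End.mul_apply, LinearMap.zero_apply] at this
    exact this
  let p : S₀ →ₗ[ℝ] Sp := LinearMap.codRestrict Sp ((2:ℝ)⁻¹ • (1 + D)) hp
  let q : S₀ →ₗ[ℝ] Sp := LinearMap.codRestrict Sp (-(J * ((2:ℝ)⁻¹ • (1 - D)))) hq
  let g : S₀ →ₗ[ℝ] ℂ ⊗[ℝ] Sp :=
    ((TensorProduct.mk ℝ ℂ Sp) 1).comp p + ((TensorProduct.mk ℝ ℂ Sp) Complex.I).comp q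
  have hfg : ∀ s : S₀, f (g s) = s := by
    intro s
    have h0 : g s = (1 : ℂ) ⊗ₜ p s + Complex.I ⊗ₜ q s := rfl
    have h1 : f (g s) = ((p s : S₀)) + J (q s : S₀) := by
      rw [h0, map_add, hf, hf]
      simp only [Complex.one_re, Complex.one_im, Complex.I_re, Complex.I_im,
        one_smul, zero_smul, add_zero, zero_add]
    rw [h1]
    have hpv : (p s : S₀) = (2:ℝ)⁻¹ • (s + D s) := by
      show ((2:ℝ)⁻¹ • ((1 : Module.End ℝ S₀) + D)) s = _
      rw [LinearMap.smul_apply, LinearMap.add_apply, Module.End.one_apply]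
    have hqv : (q s : S₀) = -(J ((2:ℝ)⁻¹ • (s - D s))) := by
      show (-(J * ((2:ℝ)⁻¹ • ((1 : Module.End ℝ S₀) - D)))) s = _
      rw [LinearMap.neg_apply, Module.End.mul_apply, LinearMap.smul_apply,
        LinearMap.sub_apply, Module.End.one_apply]
    rw [hpv, hqv, map_neg, hJJ, neg_neg]
    module
  have hgf : ∀ t : ℂ ⊗[ℝ] Sp, g (f t) = t := by
    have key : ∀ (z : ℂ) (x : Sp), g (f (z ⊗ₜ x)) = z ⊗ₜ x := by
      intro z x
      have hDx' := hDx x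
      have hDJx' : D (J (x : S₀)) = -(J (x : S₀)) := by rw [hDJx, hDx']
      have hpv : p (f (z ⊗ₜ x)) = z.re • x := by
        apply Subtype.ext
        rw [hf]
        show ((2:ℝ)⁻¹ • ((1 : Module.End ℝ S₀) + D)) (z.re • (x : S₀) + z.im • J (x : S₀))
          = z.re • (x : S₀)
        rw [LinearMap.smul_apply, LinearMap.add_apply, Module.End.one_apply]
        simp only [map_add, map_sub, map_neg, map_smul, hDx', hDJx', hJJ, smul_neg, neg_neg]
        module
      have hqv : q (f (z ⊗ₜ x)) = z.im • x := by
        apply Subtype.ext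
        rw [hf]
        show (-(J * ((2:ℝ)⁻¹ • ((1 : Module.End ℝ S₀) - D))))
            (z.re • (x : S₀) + z.im • J (x : S₀)) = z.im • (x : S₀)
        rw [LinearMap.neg_apply, Module.End.mul_apply, LinearMap.smul_apply,
          LinearMap.sub_apply, Module.End.one_apply]
        simp only [map_add, map_sub, map_neg, map_smul, hDx', hDJx', hJJ, smul_neg, neg_neg]
        module
      have hg0 : g (f (z ⊗ₜ x)) = (1 : ℂ) ⊗ₜ (p (f (z ⊗ₜ x))) + Complex.I ⊗ₜ (q (f (z ⊗ₜ x))) := rfl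
      have hz : (z.re • (1:ℂ) + z.im • Complex.I) = z := by
        simp only [Complex.real_smul, mul_one]
        exact Complex.re_add_im z
      rw [hg0, hpv, hqv, tmul_smul, tmul_smul, smul_tmul', smul_tmul', ← add_tmul, hz]
    intro t
    induction t using TensorProduct.induction_on with
    | zero => simp
    | tmul z x => exact key z x
    | add a b ha hb => rw [map_add, map_add, ha, hb]
  exact ⟨f, hf, Function.bijective_iff_has_inverse.mpr ⟨g, hgf, hfg⟩⟩
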